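/- Let (E, ℰ, μ) be a probability space, p ∈ [1, ∞), and let w : ℝ₊ → ℝ₊ be a nondecreasing, nonnegative concave function with w(0) = 0. Then for every h ∈ L^p(μ), the L^p norm of w(|h|) satisfies ‖w(|h|)‖_p ≤ 2^{1/p} · w(‖h‖_p). -/

import Mathlib

open MeasureTheory Set

lemma aux_pointwise (p : ℝ) (hp : 1 ≤ p) (w : ℝ → ℝ)
    (hw_mono : MonotoneOn w (Ici 0)) (hw_nonneg : ∀ z ∈ Ici (0:ℝ), 0 ≤ w z)
    (hw_concave : ConcaveOn ℝ (Ici 0) w) (hw0 : w 0 = 0)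
    (M : ℝ) (hM : 0 < M) (t : ℝ) (ht : 0 ≤ t) :
    w t ^ p ≤ w M ^ p * (1 + t ^ p / M ^ p) := by
  have hp0 : 0 < p := lt_of_lt_of_le one_pos hp
  have hwM : 0 ≤ w M := hw_nonneg M hM.le
  have hwt : 0 ≤ w t := hw_nonneg t ht
  have hfac : (0:ℝ) ≤ t ^ p / M ^ p :=
    div_nonneg (Real.rpow_nonneg ht p) (Real.rpow_nonneg hM.le p)
  rcases le_or_gt t M with h1 | h1
  · have hwtM : w t ≤ w M := hw_mono ht hM.le h1
    have := Real.rpow_le_rpow hwt hwtM hp0.le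
    calc w t ^ p ≤ w M ^ p := this
      _ ≤ w M ^ p * (1 + t ^ p / M ^ p) := by
          nlinarith [Real.rpow_nonneg hwM p]
  · -- concavity: w M ≥ (M/t) * w t
    have htpos : 0 < t := hM.trans h1
    have ha : (0:ℝ) ≤ M / t := by positivity
    have hb : (0:ℝ) ≤ 1 - M / t := by
      have : M / t ≤ 1 := by
        rw [div_le_one htpos]; exact h1.le
      linarith
    have hsum : M / t + (1 - M / t) = 1 := by ring
    have hcc := hw_concave.2 (mem_Ici.mpr ht) (mem_Ici.mpr le_rfl) ha hb hsum
    simp only [smul_eq_mul, mul_zero, add_zero, hw0] at hcc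
    have hMt : M / t * t = M := div_mul_cancel₀ M htpos.ne'
    rw [hMt] at hcc
    -- hcc : M / t * w t + (1 - M/t)*0 ≤ w M
    have hwt_le : w t ≤ t / M * w M := by
      rw [div_mul_eq_mul_div, le_div_iff₀ hM]
      calc w t * M = M / t * w t * t := by field_simp
        _ ≤ w M * t := by nlinarith
        _ = t * w M := mul_comm _ _
    have h2 : w t ^ p ≤ (t / M * w M) ^ p :=
      Real.rpow_le_rpow hwt hwt_le hp0.le
    have h3 : (t / M * w M) ^ p = t ^ p / M ^ p * w M ^ p := by
      rw [Real.mul_rpow (by positivity) hwM, Real.div_rpow ht hM.le]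
    calc w t ^ p ≤ t ^ p / M ^ p * w M ^ p := h3 ▸ h2
      _ ≤ w M ^ p * (1 + t ^ p / M ^ p) := by
          nlinarith [Real.rpow_nonneg hwM p]

theorem stmt_1 {E : Type*} [MeasurableSpace E] (μ : Measure E) [IsProbabilityMeasure μ]
    (p : ℝ) (hp : 1 ≤ p) (w : ℝ → ℝ)
    (hw_mono : MonotoneOn w (Ici 0)) (hw_nonneg : ∀ z ∈ Ici (0:ℝ), 0 ≤ w z)
    (hw_concave : ConcaveOn ℝ (Ici 0) w) (hw0 : w 0 = 0)
    (h : E → ℝ) (hmeas : Measurable h)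
    (hint : Integrable (fun x => |h x| ^ p) μ)
    (hint' : Integrable (fun x => (w |h x|) ^ p) μ) :
    (∫ x, (w |h x|) ^ p ∂μ) ^ (1 / p)
      ≤ 2 ^ (1 / p) * w ((∫ x, |h x| ^ p ∂μ) ^ (1 / p)) := by
  have hp0 : 0 < p := lt_of_lt_of_le one_pos hp
  set A : ℝ := ∫ x, |h x| ^ p ∂μ with hA_def
  have hA : 0 ≤ A := integral_nonneg fun x => Real.rpow_nonneg (abs_nonneg _) p
  set M : ℝ := A ^ (1 / p) with hM_def
  have hM0 : 0 ≤ M := Real.rpow_nonneg hA _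
  have hMp : M ^ p = A := by
    rw [hM_def, ← Real.rpow_mul hA, one_div, inv_mul_cancel₀ hp0.ne', Real.rpow_one]
  rcases eq_or_lt_of_le hA with hA0 | hApos
  · -- A = 0 case
    have hzero : (fun x => |h x| ^ p) =ᵐ[μ] 0 := by
      rw [← integral_eq_zero_iff_of_nonneg (fun x => Real.rpow_nonneg (abs_nonneg _) p) hint]
      exact hA0.symm
    have hzero' : (fun x => (w |h x|) ^ p) =ᵐ[μ] 0 := by
      filter_upwards [hzero] with x hx
      have : |h x| = 0 := by
        by_contra hne
        have : (0:ℝ) < |h x| := lt_of_le_of_ne (abs_nonneg _) (Ne.symm hne)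
        have := Real.rpow_pos_of_pos this p
        simp only [Pi.zero_apply] at hx
        linarith
      simp [this, hw0, Real.zero_rpow hp0.ne']
    have hI : ∫ x, (w |h x|) ^ p ∂μ = 0 := integral_eq_zero_of_ae hzero'
    have hMz : M = 0 := by
      rw [hM_def, ← hA0, Real.zero_rpow (by positivity)]
    rw [hI, Real.zero_rpow (by positivity : (1:ℝ)/p ≠ 0), hMz, hw0, mul_zero]
  · have hMpos : 0 < M := Real.rpow_pos_of_pos hApos _
    have hrhs_int : Integrable (fun x => w M ^ p * (1 + |h x| ^ p / M ^ p)) μ :=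
      ((integrable_const (1:ℝ)).add (hint.div_const _)).const_mul _
    have hbound : ∫ x, (w |h x|) ^ p ∂μ ≤ ∫ x, w M ^ p * (1 + |h x| ^ p / M ^ p) ∂μ :=
      integral_mono hint' hrhs_int fun x =>
        aux_pointwise p hp w hw_mono hw_nonneg hw_concave hw0 M hMpos _ (abs_nonneg _)
    have hcalc : ∫ x, w M ^ p * (1 + |h x| ^ p / M ^ p) ∂μ = 2 * w M ^ p := by
      rw [integral_const_mul, integral_add (integrable_const 1) (hint.div_const _),
        integral_const, integral_div, probReal_univ]
      rw [← hA_def, hMp, div_self hApos.ne']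
      simp; ring
    have hbound2 : ∫ x, (w |h x|) ^ p ∂μ ≤ 2 * w M ^ p := hcalc ▸ hbound
    have hInonneg : 0 ≤ ∫ x, (w |h x|) ^ p ∂μ :=
      integral_nonneg fun x => Real.rpow_nonneg (hw_nonneg _ (mem_Ici.mpr (abs_nonneg _))) p
    have hwM : 0 ≤ w M := hw_nonneg M hM0
    calc (∫ x, (w |h x|) ^ p ∂μ) ^ (1 / p)
        ≤ (2 * w M ^ p) ^ (1 / p) :=
          Real.rpow_le_rpow hInonneg hbound2 (by positivity)
      _ = 2 ^ (1 / p) * w M := by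
          rw [Real.mul_rpow (by norm_num) (Real.rpow_nonneg hwM p),
            ← Real.rpow_mul hwM, mul_one_div, div_self hp0.ne', Real.rpow_one]
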